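/- Let p > 2 and let (w_m)_{m∈ℕ} be a sequence in (0,1] with w_m → 0. For each n ∈ ℕ let Y_n be the corresponding space on (ℕ×ℕ)^n with norm given by the family 𝒫_n = {(P_I, W_I) : I ⊆ {1,…,n}}, and let |||·||| be the envelope norm generated by 𝒫_n. Then sup{ |||x||| / ‖x‖_{Y_n} : x ∈ Y_n, x ≠ 0 } ≥ n^{1/p}. -/

import Mathlib

open scoped ENNReal
open MeasureTheory Filter

noncomputable section

variable {α : Type*}

/-- `P` is a partition of the type `α`: a collection of pairwise disjoint
nonempty subsets of `α` whose union is all of `α`. -/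
def IsPartition (P : Set (Set α)) : Prop :=
  (∀ N ∈ P, N.Nonempty) ∧ P.PairwiseDisjoint id ∧ ⋃₀ P = Set.univ

/-- A weight function takes values in `(0,1]`. -/
def IsWeight (W : α → ℝ) : Prop := ∀ a, W a ∈ Set.Ioc (0 : ℝ) 1

/-- `‖x‖_{P,W} = (Σ_{N∈P} (Σ_{j∈N} x_j² w_j²)^{p/2})^{1/p}`, valued in `[0,∞]`. -/
def pwNorm (p : ℝ) (P : Set (Set α)) (W : α → ℝ) (x : α → ℝ) : ℝ≥0∞ :=
  (∑' N : P, (∑' j : N.1, ENNReal.ofReal ((x j.1) ^ 2 * (W j.1) ^ 2)) ^ (p / 2)) ^ (1 / p)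

/-- A partition–weight pair on `α`. -/
abbrev PWPair (α : Type*) := Set (Set α) × (α → ℝ)

/-- Every member of the family is a genuine partition–weight pair. -/
def IsPWFamily (𝒞 : Set (PWPair α)) : Prop :=
  ∀ PW ∈ 𝒞, IsPartition PW.1 ∧ IsWeight PW.2

/-- `‖x‖_𝒞 = sup_{(P,W) ∈ 𝒞} ‖x‖_{P,W}`. -/
def famNorm (p : ℝ) (𝒞 : Set (PWPair α)) (x : α → ℝ) : ℝ≥0∞ :=
  ⨆ PW ∈ 𝒞, pwNorm p PW.1 PW.2 x

/-- The block of the partition `Q` containing `b` (for a genuine partition this is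
the unique element of `Q` containing `b`). -/
def blockOf (Q : Set (Set α)) (b : α) : Set α := ⋃₀ {q ∈ Q | b ∈ q}

/-- The partition `P(Q,T)` obtained from a partition `Q` and a choice `T` of a
partition–weight pair for each block of `Q`. -/
def envPartition (Q : Set (Set α)) (T : Set α → PWPair α) : Set (Set α) :=
  {K | K.Nonempty ∧ ∃ q ∈ Q, ∃ s ∈ (T q).1, K = q ∩ s}

/-- The weight `W(Q,T)`: on the block `q` of `Q` it is the weight chosen by `T q`. -/
def envWeight (Q : Set (Set α)) (T : Set α → PWPair α) : α → ℝ :=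
  fun b => (T (blockOf Q b)).2 b

/-- A family of partition–weight pairs satisfies the envelope property if it is
closed under the operation `(Q, T) ↦ (P(Q,T), W(Q,T))`. -/
def EnvelopeProp (𝒞 : Set (PWPair α)) : Prop :=
  ∀ Q : Set (Set α), IsPartition Q → ∀ T : Set α → PWPair α, (∀ q ∈ Q, T q ∈ 𝒞) →
    (envPartition Q T, envWeight Q T) ∈ 𝒞

/-- The family `𝒞̃` of all pairs `(P(Q,T), W(Q,T))`. -/
def envFam (𝒞 : Set (PWPair α)) : Set (PWPair α) :=
  {PW | ∃ Q T, IsPartition Q ∧ (∀ q ∈ Q, T q ∈ 𝒞) ∧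
    PW = (envPartition Q T, envWeight Q T)}

/-- The envelope norm generated by `𝒞`. -/
def envNorm (p : ℝ) (𝒞 : Set (PWPair α)) (x : α → ℝ) : ℝ≥0∞ := famNorm p (envFam 𝒞) x

/-- The index set `(ℕ×ℕ)^n`. -/
abbrev BIdx (n : ℕ) := Fin n → ℕ × ℕ

/-- The partition `P_I` of `(ℕ×ℕ)^n` into the sets obtained by fixing the coordinates
`i_k` for `k ∈ I` and letting the others range over all of `ℕ × ℕ`. -/
def PI {n : ℕ} (I : Finset (Fin n)) : Set (Set (BIdx n)) :=
  {S | ∃ g : Fin n → ℕ × ℕ, S = {i : BIdx n | ∀ k ∈ I, i k = g k}}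

/-- The weight `W_I(i) = Π_{k∉I} w_{i_k}`, where `w_{(m,l)} = w_m`. -/
def WI (w : ℕ → ℝ) {n : ℕ} (I : Finset (Fin n)) : BIdx n → ℝ :=
  fun i => ∏ k ∈ Iᶜ, w (i k).1

/-- The family of partition–weight pairs `{(P_I, W_I) : I ⊆ {1,…,n}}` defining `Y_n`. -/
def famYn (w : ℕ → ℝ) (n : ℕ) : Set (PWPair (BIdx n)) :=
  Set.range fun I : Finset (Fin n) => (PI I, WI w I)

/-- The norm of `Y_n`:  `max_{I ⊆ {1,…,n}} ‖x‖_{P_I,W_I}`. -/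
def Ynorm (p : ℝ) (w : ℕ → ℝ) (n : ℕ) (x : BIdx n → ℝ) : ℝ≥0∞ :=
  famNorm p (famYn w n) x


-- helper lemmas about blocks
def blk {n : ℕ} (I : Finset (Fin n)) (g : BIdx n) : Set (BIdx n) :=
  {i : BIdx n | ∀ k ∈ I, i k = g k}

lemma blk_mem_PI {n : ℕ} (I : Finset (Fin n)) (g : BIdx n) : blk I g ∈ PI I := ⟨g, rfl⟩

lemma mem_blk {n : ℕ} {I : Finset (Fin n)} {g i : BIdx n} :
    i ∈ blk I g ↔ ∀ k ∈ I, i k = g k := Iff.rfl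

lemma self_mem_blk {n : ℕ} (I : Finset (Fin n)) (g : BIdx n) : g ∈ blk I g :=
  fun _ _ => rfl

lemma blk_eq_of_mem {n : ℕ} {I : Finset (Fin n)} {g i : BIdx n} (h : i ∈ blk I g) :
    blk I g = blk I i := by
  ext i'
  constructor <;> intro h' k hk
  · rw [h' k hk, h k hk]
  · rw [h' k hk, ← h k hk]

lemma PI_empty {n : ℕ} : PI (∅ : Finset (Fin n)) = {Set.univ} := by
  ext S
  constructor
  · rintro ⟨g, rfl⟩
    simp [Set.eq_univ_iff_forall]
  · rintro rfl
    exact ⟨fun _ => (0,0), by simp [Set.eq_univ_iff_forall]⟩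

-- (R1)
lemma real_key {p W b D : ℝ} (hp : 2 < p) (hW0 : 0 < W) (hW1 : W ≤ 1) (hb1 : 1 ≤ b)
    (hD : 0 < D) (hkey : D⁻¹ * W ^ (-p) ≤ b ^ ((p - 2) / 2)) (c : ℕ) :
    b * ((b * W ^ 2)⁻¹ * W ^ (2 * c)) ^ (p / 2) ≤ D := by
  have hb0 : 0 < b := lt_of_lt_of_le one_pos hb1
  have hbw : 0 < b * W ^ 2 := by positivity
  have h1 : (b * W ^ 2)⁻¹ * W ^ (2 * c) ≤ (b * W ^ 2)⁻¹ := by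
    have : W ^ (2 * c) ≤ 1 := pow_le_one₀ hW0.le hW1
    nlinarith [inv_pos.mpr hbw]
  have h2 : ((b * W ^ 2)⁻¹ * W ^ (2 * c)) ^ (p / 2) ≤ ((b * W ^ 2)⁻¹) ^ (p / 2) :=
    Real.rpow_le_rpow (by positivity) h1 (by positivity)
  have h3 : ((b * W ^ 2)⁻¹) ^ (p / 2) = b ^ (-(p / 2)) * W ^ (-p) := by
    rw [← Real.rpow_neg_one (b * W ^ 2), ← Real.rpow_mul hbw.le,
      Real.mul_rpow hb0.le (by positivity), ← Real.rpow_natCast W 2,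
      ← Real.rpow_mul hW0.le]
    rw [show (-1:ℝ) * (p / 2) = -(p/2) by ring, show ((2:ℕ):ℝ) * -(p / 2) = -p by push_cast; ring]
  have h4 : W ^ (-p) ≤ D * b ^ ((p - 2) / 2) := by
    have := mul_le_mul_of_nonneg_left hkey hD.le
    rwa [← mul_assoc, mul_inv_cancel₀ hD.ne', one_mul] at this
  calc b * ((b * W ^ 2)⁻¹ * W ^ (2 * c)) ^ (p / 2)
      ≤ b * (b ^ (-(p / 2)) * W ^ (-p)) := by
        rw [← h3]; exact mul_le_mul_of_nonneg_left h2 hb0.le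
    _ ≤ b * (b ^ (-(p / 2)) * (D * b ^ ((p - 2) / 2))) := by
        refine mul_le_mul_of_nonneg_left ?_ hb0.le
        exact mul_le_mul_of_nonneg_left h4 (by positivity)
    _ = D * (b ^ (1:ℝ) * b ^ (-(p / 2)) * b ^ ((p - 2) / 2)) := by
        rw [Real.rpow_one]; ring
    _ = D := by
        rw [← Real.rpow_add hb0, ← Real.rpow_add hb0]
        rw [show (1:ℝ) + -(p / 2) + (p - 2) / 2 = 0 by ring, Real.rpow_zero, mul_one]

-- (R2)
lemma real_block {W b : ℝ} (hW : W ≠ 0) (hb : b ≠ 0) {c : ℕ} (hc : 1 ≤ c) :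
    b * ((b * W ^ 2)⁻¹ * W ^ (2 * c)) = W ^ (2 * (c - 1)) := by
  have : 2 * c = 2 * (c - 1) + 2 := by omega
  rw [this, pow_add]
  field_simp

-- (R3)
lemma real_small {p W D : ℝ} (hp : 0 < p) (hW0 : 0 < W) (hW1 : W ≤ 1)
    (h1 : W ^ p ≤ D) {c : ℕ} (hc : 2 ≤ c) :
    (W ^ (2 * (c - 1))) ^ (p / 2) ≤ D := by
  have h2 : W ^ (2 * (c - 1)) ≤ W ^ 2 := pow_le_pow_of_le_one hW0.le hW1 (by omega)
  have h3 : (W ^ (2 * (c - 1))) ^ (p / 2) ≤ (W ^ 2) ^ (p / 2) :=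
    Real.rpow_le_rpow (by positivity) h2 (by positivity)
  refine h3.trans ?_
  rw [← Real.rpow_natCast W 2, ← Real.rpow_mul hW0.le]
  rw [show ((2:ℕ):ℝ) * (p/2) = p by push_cast; ring]
  exact h1

lemma real_choice {p X b : ℝ} (hp : 2 < p) (hX : 0 ≤ X) (hb0 : 0 ≤ b)
    (hb : X ^ (2/(p-2)) ≤ b) : X ≤ b ^ ((p-2)/2) := by
  have hp2 : p - 2 ≠ 0 := by linarith
  have : (X ^ (2/(p-2))) ^ ((p-2)/2) ≤ b ^ ((p-2)/2) :=
    Real.rpow_le_rpow (Real.rpow_nonneg hX _) hb (by linarith)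
  rwa [← Real.rpow_mul hX, show 2/(p-2) * ((p-2)/2) = 1 by field_simp, Real.rpow_one] at this

lemma construction (p : ℝ) (hp : 2 < p) (w : ℕ → ℝ) (hw : IsWeight w)
    (hw0 : Tendsto w atTop (nhds 0)) (n : ℕ) (hn : 0 < n) {δ : ℝ} (hδ : 0 < δ) :
    ∃ x : BIdx n → ℝ, x ≠ 0 ∧
      Ynorm p w n x ≤ ENNReal.ofReal (1 + δ) ^ (1/p : ℝ) ∧
      (n : ℝ≥0∞) ^ (1/p : ℝ) ≤ envNorm p (famYn w n) x := by
  classical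
  have hp0 : (0:ℝ) < p := by linarith
  have hn' : (0:ℝ) < n := by exact_mod_cast hn
  set D : ℝ := δ / n with hDdef
  have hD : 0 < D := by positivity
  set η : ℝ := min (D ^ (1/p)) (1/n) with hηdef
  have hη : 0 < η := lt_min (Real.rpow_pos_of_pos hD _) (by positivity)
  obtain ⟨M, hM⟩ : ∃ M, ∀ m ≥ M, w m < η := by
    have := Metric.tendsto_atTop.mp hw0 η hη
    obtain ⟨M, hM⟩ := this
    exact ⟨M, fun m hm => by
      have := hM m hm
      rw [Real.dist_eq, sub_zero] at this
      exact lt_of_le_of_lt (le_abs_self _) this⟩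
  set t : Fin n → ℕ := fun k => M + k with htdef
  have ht_inj : Function.Injective t := fun k k' h => Fin.ext (Nat.add_left_cancel h)
  set wh : Fin n → ℝ := fun k => w (t k) with hwhdef
  have hwh0 : ∀ k, 0 < wh k := fun k => (hw (t k)).1
  have hwh1 : ∀ k, wh k ≤ 1 := fun k => (hw (t k)).2
  have hwhη : ∀ k, wh k < η := fun k => hM (t k) (Nat.le_add_right _ _)
  have hwhp : ∀ k, wh k ^ p ≤ D := by
    intro k
    have h1 : wh k ^ p ≤ (D ^ (1/p)) ^ p :=
      Real.rpow_le_rpow (hwh0 k).le ((hwhη k).le.trans (min_le_left _ _)) hp0.le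
    rwa [← Real.rpow_mul hD.le, one_div_mul_cancel hp0.ne', Real.rpow_one] at h1
  have hwhn : ∀ k, wh k ≤ 1/n := fun k => (hwhη k).le.trans (min_le_right _ _)
  set C : Fin n → ℝ := fun k => (D⁻¹ * wh k ^ (-p)) ^ (2/(p-2)) with hCdef
  set Nk : Fin n → ℕ := fun k => ⌈C k⌉₊ + 1 with hNkdef
  set b : Fin n → ℝ := fun k => (Nk k : ℝ) with hbdef
  have hNk1 : ∀ k, 1 ≤ Nk k := fun k => Nat.le_add_left _ _
  have hb1 : ∀ k, (1:ℝ) ≤ b k := by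
    intro k; simp only [hbdef]; exact_mod_cast hNk1 k
  have hb0 : ∀ k, (0:ℝ) < b k := fun k => lt_of_lt_of_le one_pos (hb1 k)
  have hkey : ∀ k, D⁻¹ * wh k ^ (-p) ≤ b k ^ ((p-2)/2) := by
    intro k
    refine real_choice hp (mul_nonneg (inv_nonneg.mpr hD.le) (Real.rpow_nonneg (hwh0 k).le _)) (hb0 k).le ?_
    calc C k ≤ ⌈C k⌉₊ := Nat.le_ceil _
      _ ≤ b k := by simp [hbdef, hNkdef]
  set a : Fin n → ℝ := fun k => Real.sqrt ((b k * wh k ^ 2)⁻¹) with hadef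
  have hbw : ∀ k, 0 < b k * wh k ^ 2 := fun k => by have := hwh0 k; have := hb0 k; positivity
  have ha2 : ∀ k, a k ^ 2 = (b k * wh k ^ 2)⁻¹ := fun k =>
    Real.sq_sqrt (inv_nonneg.mpr (hbw k).le)
  have ha0 : ∀ k, 0 < a k := fun k => Real.sqrt_pos.mpr (inv_pos.mpr (hbw k))
  -- the points
  set ek : Fin n → ℕ → BIdx n := fun k l j => (t k, if j = k then l else 0) with hekdef
  have hek_fst : ∀ k l j, (ek k l j).1 = t k := fun k l j => rfl
  have hek_k : ∀ k l, ek k l k = (t k, l) := fun k l => by simp [hekdef]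
  have hek_ne : ∀ k l j, j ≠ k → ek k l j = (t k, 0) := fun k l j hj => by simp [hekdef, hj]
  have hek_inj : ∀ k, Function.Injective (ek k) := by
    intro k l l' h
    have := congrFun h k
    rw [hek_k, hek_k] at this
    exact (Prod.mk.injEq _ _ _ _).mp this |>.2
  have hek_kk : ∀ {k l k' l'}, ek k l = ek k' l' → k = k' := by
    intro k l k' l' h
    have := congrFun h k
    have h1 : t k = t k' := by
      have := congrArg Prod.fst this
      rw [hek_fst, hek_fst] at this
      exact this
    exact ht_inj h1
  set A : Fin n → Finset (BIdx n) := fun k => (Finset.range (Nk k)).image (ek k) with hAdef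
  have hAmem : ∀ {k i}, i ∈ A k ↔ ∃ l, l < Nk k ∧ ek k l = i := by
    intro k i
    simp [hAdef, Finset.mem_image, Finset.mem_range]
  have hAne : ∀ k, (A k).Nonempty := by
    intro k
    exact ⟨ek k 0, hAmem.mpr ⟨0, hNk1 k, rfl⟩⟩
  have hAcard : ∀ k, (A k).card = Nk k := by
    intro k
    rw [hAdef]
    rw [Finset.card_image_of_injective _ (hek_inj k), Finset.card_range]
  have hA_k_of_mem : ∀ {k k' i}, i ∈ A k → i ∈ A k' → k = k' := by
    intro k k' i hk hk'
    obtain ⟨l, _, rfl⟩ := hAmem.mp hk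
    obtain ⟨l', _, h⟩ := hAmem.mp hk'
    exact (hek_kk h.symm)
  have hA_fst : ∀ {k i}, i ∈ A k → ∀ j, (i j).1 = t k := by
    intro k i hi j
    obtain ⟨l, _, rfl⟩ := hAmem.mp hi
    exact hek_fst k l j
  set S : Finset (BIdx n) := Finset.univ.biUnion A with hSdef
  have hSmem : ∀ {i}, i ∈ S ↔ ∃ k, i ∈ A k := by
    intro i; simp [hSdef]
  set x : BIdx n → ℝ := fun i => ∑ k, if i ∈ A k then a k else 0 with hxdef
  have hxA : ∀ {k i}, i ∈ A k → x i = a k := by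
    intro k i hi
    show (∑ k : Fin n, if i ∈ A k then a k else 0) = a k
    rw [Finset.sum_eq_single k]
    · rw [if_pos hi]
    · intro k' _ hk'
      rw [if_neg (fun h => hk' (hA_k_of_mem h hi))]
    · intro h; exact absurd (Finset.mem_univ k) h
  have hxS : ∀ {i}, i ∉ S → x i = 0 := by
    intro i hi
    show (∑ k : Fin n, if i ∈ A k then a k else 0) = 0
    refine Finset.sum_eq_zero fun k _ => ?_
    rw [if_neg (fun h => hi (hSmem.mpr ⟨k, h⟩))]
  have hWIA : ∀ (I : Finset (Fin n)) {k i}, i ∈ A k → WI w I i = wh k ^ (Iᶜ.card) := by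
    intro I k i hi
    rw [WI]
    rw [Finset.prod_congr rfl fun j _ => by rw [hA_fst hi j], Finset.prod_const]
  -- the scalar function
  set f : Finset (Fin n) → BIdx n → ℝ≥0∞ :=
    fun I j => ENNReal.ofReal ((x j) ^ 2 * (WI w I j) ^ 2) with hfdef
  have hfA : ∀ (I : Finset (Fin n)) {k i}, i ∈ A k →
      f I i = ENNReal.ofReal (a k ^ 2 * (wh k ^ (Iᶜ.card)) ^ 2) := by
    intro I k i hi
    rw [hfdef]
    simp only
    rw [hxA hi, hWIA I hi]
  have hf0 : ∀ (I : Finset (Fin n)) {i}, i ∉ S → f I i = 0 := by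
    intro I i hi
    rw [hfdef]
    simp only
    rw [hxS hi]
    simp
  set F : Finset (Fin n) → Set (BIdx n) → ℝ≥0∞ :=
    fun I Nb => (∑' j : Nb, f I j) ^ (p/2) with hFdef
  have hinner : ∀ (I : Finset (Fin n)) (Nb : Set (BIdx n)),
      (∑' j : Nb, f I j) = ∑ j ∈ S, if j ∈ Nb then f I j else 0 := by
    intro I Nb
    rw [tsum_subtype]
    refine (tsum_eq_sum ?_).trans (Finset.sum_congr rfl fun j _ => Set.indicator_apply _ _ _)
    intro j hj
    rw [Set.indicator_apply]
    split_ifs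
    · exact hf0 I hj
    · rfl
  have hp2 : (0:ℝ) < p / 2 := by linarith
  have hsum : ∀ I : Finset (Fin n),
      (∑' Nb : PI I, F I ↑Nb) = ∑ Nb ∈ S.image (blk I), F I Nb := by
    intro I
    rw [tsum_subtype]
    refine (tsum_eq_sum ?_).trans (Finset.sum_congr rfl fun Nb hNb => Set.indicator_of_mem ?_ _)
    · intro Nb hNb
      rw [Set.indicator_apply]
      split_ifs with hPI
      · obtain ⟨g, rfl⟩ := hPI
        rw [hFdef]
        simp only
        rw [hinner I]
        change (∑ j ∈ S, if j ∈ blk I g then f I j else 0) ^ (p / 2) = 0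
        have hz : ∀ j ∈ S, (if j ∈ blk I g then f I j else 0) = 0 := by
          intro j hj
          rw [if_neg]
          intro hmem
          exact hNb (Finset.mem_image.mpr ⟨j, hj, (blk_eq_of_mem hmem).symm⟩)
        rw [Finset.sum_congr rfl hz, Finset.sum_const, smul_zero]
        exact ENNReal.zero_rpow_of_pos hp2
      · rfl
    · obtain ⟨i, _, rfl⟩ := Finset.mem_image.mp hNb
      exact blk_mem_PI I i
  have hAsub : ∀ k, A k ⊆ S := fun k i hi => hSmem.mpr ⟨k, hi⟩
  have hSne : S.Nonempty := ⟨ek ⟨0,hn⟩ 0, hSmem.mpr ⟨⟨0,hn⟩, hAmem.mpr ⟨0, hNk1 _, rfl⟩⟩⟩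
  have hAdisjF : (↑(Finset.univ : Finset (Fin n)) : Set (Fin n)).PairwiseDisjoint A :=
    fun k _ k' _ hkk' => Finset.disjoint_left.mpr fun i hi hi' => hkk' (hA_k_of_mem hi hi')
  have hAsum : ∀ (I : Finset (Fin n)) (k : Fin n),
      (∑ j ∈ A k, f I j) = ENNReal.ofReal (b k * (a k ^ 2 * (wh k ^ Iᶜ.card) ^ 2)) := by
    intro I k
    rw [Finset.sum_congr rfl (fun j hj => hfA I hj), Finset.sum_const, hAcard, nsmul_eq_mul,
      show ((Nk k : ℕ) : ℝ≥0∞) = ENNReal.ofReal (b k) by rw [hbdef]; exact (ENNReal.ofReal_natCast _).symm,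
      ← ENNReal.ofReal_mul (hb0 k).le]
  have hpow1n : ∀ k, wh k ^ (2*(n-1)) ≤ 1/(n:ℝ) := by
    intro k
    rcases Nat.lt_or_ge n 2 with h|h
    · have : n = 1 := by omega
      subst this
      norm_num
    · have h2 : 2*(n-1) ≠ 0 := by omega
      exact (pow_le_of_le_one (hwh0 k).le (hwh1 k) h2).trans (hwhn k)
  have YI : ∀ I : Finset (Fin n), (∑' Nb : PI I, F I ↑Nb) ≤ ENNReal.ofReal (1 + δ) := by
    intro I
    rw [hsum I]
    by_cases hIe : I = ∅
    · subst hIe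
      have himg : S.image (blk (∅ : Finset (Fin n))) = {Set.univ} := by
        have h1 : ∀ i ∈ S, blk (∅ : Finset (Fin n)) i = Set.univ := by
          intro i _
          ext i'
          simp [mem_blk]
        rw [Finset.image_congr h1, Finset.image_const hSne]
      rw [himg, Finset.sum_singleton, hFdef]
      simp only
      rw [hinner]
      simp only [Set.mem_univ, if_true]
      rw [hSdef, Finset.sum_biUnion hAdisjF]
      have h3 : ∀ k : Fin n, (∑ j ∈ A k, f ∅ j) = ENNReal.ofReal (wh k ^ (2*(n-1))) := by
        intro k
        rw [hAsum ∅ k]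
        congr 1
        have hc : (∅ : Finset (Fin n))ᶜ.card = n := by
          simp [Finset.card_univ]
        rw [hc, ← pow_mul' (wh k) 2 n, ha2 k]
        exact real_block (hwh0 k).ne' (hb0 k).ne' hn
      rw [Finset.sum_congr rfl (fun k _ => h3 k)]
      have h4 : (∑ k : Fin n, ENNReal.ofReal (wh k ^ (2*(n-1)))) ≤ ENNReal.ofReal 1 := by
        rw [← ENNReal.ofReal_sum_of_nonneg (fun k _ => pow_nonneg (hwh0 k).le _)]
        refine ENNReal.ofReal_le_ofReal ?_
        calc (∑ k : Fin n, wh k ^ (2*(n-1))) ≤ ∑ _k : Fin n, 1/(n:ℝ) :=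
              Finset.sum_le_sum (fun k _ => hpow1n k)
          _ = 1 := by
              rw [Finset.sum_const, Finset.card_univ, Fintype.card_fin, nsmul_eq_mul]
              field_simp
      calc (∑ k : Fin n, ENNReal.ofReal (wh k ^ (2*(n-1)))) ^ (p/2)
          ≤ (ENNReal.ofReal 1) ^ (p/2) := ENNReal.rpow_le_rpow h4 hp2.le
        _ = 1 := by rw [ENNReal.ofReal_one, ENNReal.one_rpow]
        _ ≤ ENNReal.ofReal (1 + δ) := by
            rw [show (1:ℝ≥0∞) = ENNReal.ofReal 1 from ENNReal.ofReal_one.symm]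
            exact ENNReal.ofReal_le_ofReal (by linarith)
    · obtain ⟨k0, hk0⟩ := Finset.nonempty_of_ne_empty hIe
      have himg2 : S.image (blk I) = Finset.univ.biUnion (fun k => (A k).image (blk I)) := by
        rw [hSdef, Finset.biUnion_image]
      have hdisjB : (↑(Finset.univ : Finset (Fin n)) : Set (Fin n)).PairwiseDisjoint
          (fun k => (A k).image (blk I)) := by
        intro k _ k' _ hkk'
        simp only [Function.onFun]
        rw [Finset.disjoint_left]
        rintro Nb h1 h2
        obtain ⟨i, hi, rfl⟩ := Finset.mem_image.mp h1
        obtain ⟨i', hi', heq⟩ := Finset.mem_image.mp h2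
        have hmem : i' ∈ blk I i := heq ▸ self_mem_blk I i'
        have h3 : (i' k0).1 = (i k0).1 := by rw [hmem k0 hk0]
        rw [hA_fst hi' k0, hA_fst hi k0] at h3
        exact hkk' (ht_inj h3).symm
      rw [himg2, Finset.sum_biUnion hdisjB]
      have perk : ∀ k : Fin n, (∑ Nb ∈ (A k).image (blk I), F I Nb) ≤
          (if Iᶜ = {k} then 1 else ENNReal.ofReal D) := by
        intro k
        by_cases hkI : k ∈ I
        · -- k ∈ I : the block splits A k into singletons
          have himgk : (A k).image (blk I)
              = (Finset.range (Nk k)).image (fun l => blk I (ek k l)) := by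
            rw [hAdef]
            simp only
            rw [Finset.image_image]
            rfl
          have hinj : ∀ l ∈ Finset.range (Nk k), ∀ l' ∈ Finset.range (Nk k),
              blk I (ek k l) = blk I (ek k l') → l = l' := by
            intro l _ l' _ h
            have : ek k l' ∈ blk I (ek k l) := h ▸ self_mem_blk I (ek k l')
            have h4 := this k hkI
            rw [hek_k, hek_k] at h4
            exact ((Prod.mk.injEq _ _ _ _).mp h4).2.symm
          rw [himgk, Finset.sum_image hinj]
          have hterm : ∀ l ∈ Finset.range (Nk k), F I (blk I (ek k l))
              = ENNReal.ofReal ((a k ^ 2 * (wh k ^ Iᶜ.card) ^ 2) ^ (p/2)) := by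
            intro l hl
            rw [hFdef]
            simp only
            rw [hinner]
            have hsingle : ∀ j ∈ S, j ≠ ek k l →
                (if j ∈ blk I (ek k l) then f I j else 0) = 0 := by
              intro j hj hne
              rw [if_neg]
              intro hmem
              obtain ⟨k'', hk''⟩ := hSmem.mp hj
              have h5 : (j k0).1 = t k := by rw [hmem k0 hk0]
              have h6 : k'' = k := ht_inj ((hA_fst hk'' k0).symm.trans h5)
              have hk2 : j ∈ A k := h6 ▸ hk''
              obtain ⟨l'', _, rfl⟩ := hAmem.mp hk2
              have h7 := hmem k hkI
              rw [hek_k, hek_k] at h7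
              exact hne (by rw [((Prod.mk.injEq _ _ _ _).mp h7).2])
            have hmemS : ek k l ∈ S :=
              hSmem.mpr ⟨k, hAmem.mpr ⟨l, Finset.mem_range.mp hl, rfl⟩⟩
            rw [Finset.sum_eq_single_of_mem (ek k l) hmemS hsingle,
              if_pos (self_mem_blk I (ek k l)),
              hfA I (hAmem.mpr ⟨l, Finset.mem_range.mp hl, rfl⟩),
              ENNReal.ofReal_rpow_of_nonneg (by positivity) hp2.le]
          rw [Finset.sum_congr rfl hterm, Finset.sum_const, Finset.card_range, nsmul_eq_mul,
            show ((Nk k : ℕ) : ℝ≥0∞) = ENNReal.ofReal (b k) by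
              rw [hbdef]; exact (ENNReal.ofReal_natCast _).symm,
            ← ENNReal.ofReal_mul (hb0 k).le]
          have hreal : b k * (a k ^ 2 * (wh k ^ Iᶜ.card) ^ 2) ^ (p/2) ≤ D := by
            have := real_key hp (hwh0 k) (hwh1 k) (hb1 k) hD (hkey k) (Iᶜ.card)
            rwa [pow_mul' (wh k) 2 (Iᶜ.card), ← ha2 k] at this
          refine le_trans (ENNReal.ofReal_le_ofReal hreal) ?_
          have hnec : ¬(Iᶜ = {k}) := fun h =>
            (Finset.mem_compl.mp (by rw [h]; exact Finset.mem_singleton_self k)) hkI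
          rw [if_neg hnec]
        · -- k ∉ I : A k lies in a single block
          have hkIc : k ∈ Iᶜ := Finset.mem_compl.mpr hkI
          have hc1 : 1 ≤ Iᶜ.card := Finset.card_pos.mpr ⟨k, hkIc⟩
          have himgk : (A k).image (blk I) = {blk I (ek k 0)} := by
            rw [hAdef]
            simp only
            rw [Finset.image_image]
            have hconst : ∀ l ∈ Finset.range (Nk k), (blk I ∘ ek k) l = blk I (ek k 0) := by
              intro l _
              show blk I (ek k l) = blk I (ek k 0)
              refine blk_eq_of_mem ?_
              intro j hj
              have hjk : j ≠ k := fun h => hkI (h ▸ hj)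
              rw [hek_ne k 0 j hjk, hek_ne k l j hjk]
            rw [Finset.image_congr hconst,
              Finset.image_const (Finset.nonempty_range_iff.mpr (by have := hNk1 k; omega))]
          rw [himgk, Finset.sum_singleton, hFdef]
          simp only
          rw [hinner]
          have hiff : ∀ j ∈ S, (if j ∈ blk I (ek k 0) then f I j else 0)
              = (if j ∈ A k then f I j else 0) := by
            intro j hj
            by_cases hjA : j ∈ A k
            · rw [if_pos hjA, if_pos]
              intro j' hj'
              have hjk : j' ≠ k := fun h => hkI (h ▸ hj')
              obtain ⟨l, _, rfl⟩ := hAmem.mp hjA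
              rw [hek_ne k 0 j' hjk, hek_ne k l j' hjk]
            · rw [if_neg hjA, if_neg]
              intro hmem
              obtain ⟨k'', hk''⟩ := hSmem.mp hj
              have h5 : (j k0).1 = t k := by rw [hmem k0 hk0]
              have h6 : k'' = k := ht_inj ((hA_fst hk'' k0).symm.trans h5)
              exact hjA (h6 ▸ hk'')
          rw [Finset.sum_congr rfl hiff]
          have hres : (∑ j ∈ S, if j ∈ A k then f I j else 0)
              = ∑ j ∈ A k, f I j := by
            rw [← Finset.sum_filter]
            refine Finset.sum_congr ?_ (fun _ _ => rfl)
            ext j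
            simp only [Finset.mem_filter]
            exact ⟨fun h => h.2, fun h => ⟨hAsub k h, h⟩⟩
          rw [hres, hAsum I k]
          have hreal2 : b k * (a k ^ 2 * (wh k ^ Iᶜ.card) ^ 2) = wh k ^ (2 * (Iᶜ.card - 1)) := by
            rw [← pow_mul' (wh k) 2 (Iᶜ.card), ha2 k]
            exact real_block (hwh0 k).ne' (hb0 k).ne' hc1
          rw [hreal2, ENNReal.ofReal_rpow_of_nonneg (pow_nonneg (hwh0 k).le _) hp2.le]
          by_cases hIc : Iᶜ = {k}
          · rw [if_pos hIc, hIc]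
            simp only [Finset.card_singleton]
            norm_num
          · rw [if_neg hIc]
            have hc2 : 2 ≤ Iᶜ.card := by
              have hss : ({k} : Finset (Fin n)) ⊂ Iᶜ :=
                (Finset.ssubset_iff_subset_ne).mpr
                  ⟨Finset.singleton_subset_iff.mpr hkIc, fun h => hIc h.symm⟩
              have := Finset.card_lt_card hss
              simp at this; omega
            exact ENNReal.ofReal_le_ofReal (real_small hp0 (hwh0 k) (hwh1 k) (hwhp k) hc2)
      calc (∑ k : Fin n, ∑ Nb ∈ (A k).image (blk I), F I Nb)
          ≤ ∑ k : Fin n, (if Iᶜ = {k} then 1 else ENNReal.ofReal D) :=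
            Finset.sum_le_sum (fun k _ => perk k)
        _ ≤ ∑ k : Fin n, ((if Iᶜ = {k} then (1:ℝ≥0∞) else 0) + ENNReal.ofReal D) := by
            refine Finset.sum_le_sum (fun k _ => ?_)
            split_ifs
            · exact le_self_add
            · exact le_add_self
        _ = (∑ k : Fin n, if Iᶜ = {k} then (1:ℝ≥0∞) else 0)
              + (n : ℝ≥0∞) * ENNReal.ofReal D := by
            rw [Finset.sum_add_distrib, Finset.sum_const, Finset.card_univ, Fintype.card_fin,
              nsmul_eq_mul]
        _ ≤ 1 + ENNReal.ofReal δ := by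
            refine add_le_add ?_ ?_
            · by_cases hone : ∃ k1, Iᶜ = {k1}
              · obtain ⟨k1, hk1⟩ := hone
                have : ∀ k : Fin n, (Iᶜ = {k}) = (k1 = k) := by
                  intro k
                  rw [hk1]
                  simp [Finset.singleton_inj]
                simp only [this]
                rw [Finset.sum_ite_eq Finset.univ k1 (fun _ => (1:ℝ≥0∞))]
                simp
              · have : ∀ k : Fin n, (if Iᶜ = {k} then (1:ℝ≥0∞) else 0) = 0 := by
                  intro k
                  rw [if_neg (fun h => hone ⟨k, h⟩)]
                rw [Finset.sum_congr rfl (fun k _ => this k), Finset.sum_const, smul_zero]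
                exact zero_le_one
            · rw [show ((n:ℕ) : ℝ≥0∞) = ENNReal.ofReal (n:ℝ) from (ENNReal.ofReal_natCast _).symm,
                ← ENNReal.ofReal_mul (by positivity)]
              refine ENNReal.ofReal_le_ofReal ?_
              rw [hDdef]
              rw [mul_div_cancel₀ δ hn'.ne']
        _ = ENNReal.ofReal (1 + δ) := by
            rw [ENNReal.ofReal_add (by norm_num) hδ.le, ENNReal.ofReal_one]
  have hYbound : Ynorm p w n x ≤ ENNReal.ofReal (1 + δ) ^ (1/p : ℝ) := by
    rw [Ynorm, famNorm]
    refine iSup₂_le ?_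
    rintro PW ⟨I, rfl⟩
    rw [pwNorm]
    exact ENNReal.rpow_le_rpow (YI I) (one_div_nonneg.mpr hp0.le)
  haveI hinf : Infinite (BIdx n) := Infinite.of_injective
    (fun m : ℕ => (fun _ => (m, 0) : BIdx n))
    (fun m m' h => by
      have := congrFun h ⟨0, hn⟩
      exact ((Prod.mk.injEq _ _ _ _).mp this).1)
  set R : Set (BIdx n) := (↑S)ᶜ with hRdef
  have hRne : R.Nonempty := (S.finite_toSet.infinite_compl).nonempty
  set Q : Set (Set (BIdx n)) := (Set.range fun k => (A k : Set (BIdx n))) ∪ {R} with hQdef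
  have hQmemA : ∀ k, (A k : Set (BIdx n)) ∈ Q :=
    fun k => Set.mem_union_left _ ⟨k, rfl⟩
  have hQcases : ∀ q ∈ Q, (∃ k, q = (A k : Set (BIdx n))) ∨ q = R := by
    intro q hq
    rcases hq with h | h
    · obtain ⟨k, rfl⟩ := h
      exact Or.inl ⟨k, rfl⟩
    · exact Or.inr h
  have hQpart : IsPartition Q := by
    refine ⟨?_, ?_, ?_⟩
    · intro N hN
      rcases hQcases N hN with ⟨k, rfl⟩ | rfl
      · exact Finset.coe_nonempty.mpr (hAne k)
      · exact hRne
    · intro q1 h1 q2 h2 hne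
      show Disjoint q1 q2
      rcases hQcases q1 h1 with ⟨k1, rfl⟩ | rfl <;> rcases hQcases q2 h2 with ⟨k2, rfl⟩ | rfl
      · have hk : k1 ≠ k2 := fun h => hne (by rw [h])
        rw [Set.disjoint_left]
        intro i hi1 hi2
        exact hk (hA_k_of_mem (Finset.mem_coe.mp hi1) (Finset.mem_coe.mp hi2))
      · rw [hRdef, Set.disjoint_compl_right_iff_subset]
        exact fun i hi => Finset.mem_coe.mpr (hAsub k1 (Finset.mem_coe.mp hi))
      · rw [hRdef, Set.disjoint_compl_left_iff_subset]
        exact fun i hi => Finset.mem_coe.mpr (hAsub k2 (Finset.mem_coe.mp hi))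
      · exact absurd rfl hne
    · ext i
      simp only [Set.mem_sUnion, Set.mem_univ, iff_true]
      by_cases hiS : i ∈ S
      · obtain ⟨k, hk⟩ := hSmem.mp hiS
        exact ⟨(A k : Set (BIdx n)), hQmemA k, Finset.mem_coe.mpr hk⟩
      · refine ⟨R, Set.mem_union_right _ rfl, ?_⟩
        rw [hRdef]
        exact fun hc => hiS (Finset.mem_coe.mp hc)
  set T : Set (BIdx n) → PWPair (BIdx n) := fun s =>
    if h : ∃ k, s = (A k : Set (BIdx n)) then (PI ({h.choose}ᶜ), WI w ({h.choose}ᶜ))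
    else (PI (Finset.univ : Finset (Fin n)), WI w Finset.univ) with hTdef
  have hTfam : ∀ q ∈ Q, T q ∈ famYn w n := by
    intro q _
    simp only [hTdef]
    split_ifs with h
    · exact ⟨_, rfl⟩
    · exact ⟨_, rfl⟩
  have hAinj : ∀ k k', (A k : Set (BIdx n)) = A k' → k = k' := by
    intro k k' h
    obtain ⟨i, hi⟩ := hAne k
    have hi' : i ∈ A k' := by
      rw [← Finset.mem_coe, ← h]
      exact Finset.mem_coe.mpr hi
    exact hA_k_of_mem hi hi'
  have hTA : ∀ k, T (A k : Set (BIdx n)) = (PI ({k}ᶜ), WI w ({k}ᶜ)) := by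
    intro k
    have h : ∃ k', (A k : Set (BIdx n)) = A k' := ⟨k, rfl⟩
    simp only [hTdef]
    rw [dif_pos h, ← hAinj _ _ h.choose_spec]
  have hblockOf : ∀ {k i}, i ∈ A k → blockOf Q i = (A k : Set (BIdx n)) := by
    intro k i hi
    rw [blockOf]
    have heq : {q | q ∈ Q ∧ i ∈ q} = {(A k : Set (BIdx n))} := by
      ext q
      simp only [Set.mem_setOf_eq, Set.mem_singleton_iff]
      constructor
      · rintro ⟨hq, hiq⟩
        rcases hQcases q hq with ⟨k', rfl⟩ | rfl
        · have hk : k' = k := hA_k_of_mem (Finset.mem_coe.mp hiq) hi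
          rw [hk]
        · exact absurd (Finset.mem_coe.mpr (hAsub k hi)) hiq
      · rintro rfl
        exact ⟨hQmemA k, Finset.mem_coe.mpr hi⟩
    rw [heq, Set.sUnion_singleton]
  have henvW : ∀ {k i}, i ∈ A k → envWeight Q T i = wh k := by
    intro k i hi
    rw [envWeight, hblockOf hi, hTA k]
    show WI w ({k}ᶜ) i = wh k
    rw [WI]
    rw [compl_compl, Finset.prod_singleton, hA_fst hi k]
  have hAsubblk : ∀ k, (A k : Set (BIdx n)) ⊆ blk ({k}ᶜ) (ek k 0) := by
    intro k i hi
    intro j hj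
    have hjk : j ≠ k := by simpa using hj
    obtain ⟨l, _, rfl⟩ := hAmem.mp (Finset.mem_coe.mp hi)
    rw [hek_ne k l j hjk, hek_ne k 0 j hjk]
  have hmemEnv : ∀ k, (A k : Set (BIdx n)) ∈ envPartition Q T := by
    intro k
    refine ⟨Finset.coe_nonempty.mpr (hAne k),
      (A k : Set (BIdx n)), hQmemA k, blk ({k}ᶜ) (ek k 0), ?_, ?_⟩
    · rw [hTA k]
      exact blk_mem_PI _ _
    · exact (Set.inter_eq_left.mpr (hAsubblk k)).symm
  have henvmem : (envPartition Q T, envWeight Q T) ∈ envFam (famYn w n) :=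
    ⟨Q, T, hQpart, hTfam, rfl⟩
  set G : ↥(envPartition Q T) → ℝ≥0∞ := fun Nb =>
    (∑' j : Nb.1, ENNReal.ofReal ((x j.1) ^ 2 * (envWeight Q T j.1) ^ 2)) ^ (p/2) with hGdef
  have hterm : ∀ k : Fin n, G ⟨(A k : Set (BIdx n)), hmemEnv k⟩ = 1 := by
    intro k
    rw [hGdef]
    simp only
    have h1 : (∑' j : (A k : Set (BIdx n)),
        ENNReal.ofReal ((x j.1) ^ 2 * (envWeight Q T j.1) ^ 2))
        = ∑ j ∈ A k, ENNReal.ofReal ((x j) ^ 2 * (envWeight Q T j) ^ 2) := by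
      refine (tsum_subtype ((A k : Set (BIdx n)))
        (fun i => ENNReal.ofReal ((x i) ^ 2 * (envWeight Q T i) ^ 2))).trans ?_
      refine (tsum_eq_sum ?_).trans
        (Finset.sum_congr rfl fun j hj => Set.indicator_of_mem (Finset.mem_coe.mpr hj) _)
      intro j hj
      exact Set.indicator_of_notMem (fun hc => hj (Finset.mem_coe.mp hc)) _
    rw [h1]
    have h2 : ∀ j ∈ A k, ENNReal.ofReal ((x j) ^ 2 * (envWeight Q T j) ^ 2)
        = ENNReal.ofReal (a k ^ 2 * wh k ^ 2) := by
      intro j hj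
      rw [hxA hj, henvW hj]
    rw [Finset.sum_congr rfl h2, Finset.sum_const, hAcard, nsmul_eq_mul,
      show ((Nk k : ℕ) : ℝ≥0∞) = ENNReal.ofReal (b k) by
        rw [hbdef]; exact (ENNReal.ofReal_natCast _).symm,
      ← ENNReal.ofReal_mul (hb0 k).le]
    have h3 : b k * (a k ^ 2 * wh k ^ 2) = 1 := by
      rw [ha2 k]
      field_simp
      exact div_self (mul_pos (hb0 k) (hwh0 k)).ne'
    rw [h3, ENNReal.ofReal_one, ENNReal.one_rpow]
  have hEbound : (n : ℝ≥0∞) ^ (1/p : ℝ) ≤ envNorm p (famYn w n) x := by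
    have h1 : pwNorm p (envPartition Q T) (envWeight Q T) x ≤ envNorm p (famYn w n) x := by
      rw [envNorm, famNorm]
      exact le_iSup₂ (f := fun PW (_ : PW ∈ envFam (famYn w n)) => pwNorm p PW.1 PW.2 x)
        _ henvmem
    refine le_trans ?_ h1
    rw [pwNorm]
    refine ENNReal.rpow_le_rpow ?_ (one_div_nonneg.mpr hp0.le)
    have hembinj : ∀ k ∈ (Finset.univ : Finset (Fin n)), ∀ k' ∈ (Finset.univ : Finset (Fin n)),
        (⟨(A k : Set (BIdx n)), hmemEnv k⟩ : ↥(envPartition Q T))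
          = ⟨(A k' : Set (BIdx n)), hmemEnv k'⟩ → k = k' := by
      intro k _ k' _ h
      exact hAinj k k' (congrArg Subtype.val h)
    calc (n : ℝ≥0∞) = ∑ k : Fin n, G ⟨(A k : Set (BIdx n)), hmemEnv k⟩ := by
          rw [Finset.sum_congr rfl (fun k _ => hterm k), Finset.sum_const, Finset.card_univ,
            Fintype.card_fin, nsmul_eq_mul, mul_one]
      _ = ∑ Nb ∈ Finset.univ.image
            (fun k : Fin n => (⟨(A k : Set (BIdx n)), hmemEnv k⟩ : ↥(envPartition Q T))), G Nb :=
          (Finset.sum_image hembinj).symm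
      _ ≤ ∑' Nb : envPartition Q T, G Nb := ENNReal.sum_le_tsum _
  have hx0 : x ≠ 0 := by
    intro h
    have h1 : x (ek ⟨0,hn⟩ 0) = a ⟨0,hn⟩ := hxA (hAmem.mpr ⟨0, hNk1 _, rfl⟩)
    rw [h] at h1
    simp only [Pi.zero_apply] at h1
    exact (ha0 ⟨0,hn⟩).ne' h1.symm
  exact ⟨x, hx0, hYbound, hEbound⟩

/-- For each `n`, the ratio of the envelope norm generated by
`{(P_I, W_I) : I ⊆ {1,…,n}}` to the `Y_n`-norm has supremum at least `n^{1/p}` over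
nonzero elements of `Y_n`. -/
theorem statement17 (p : ℝ) (hp : 2 < p) (w : ℕ → ℝ) (hw : IsWeight w)
    (hw0 : Filter.Tendsto w Filter.atTop (nhds 0)) (n : ℕ) :
    (n : ℝ≥0∞) ^ ((1 : ℝ) / p) ≤
      ⨆ (x : BIdx n → ℝ) (_ : x ≠ 0) (_ : Ynorm p w n x < ⊤),
        envNorm p (famYn w n) x / Ynorm p w n x := by
  have hp0 : (0:ℝ) < p := by linarith
  rcases Nat.eq_zero_or_pos n with hn | hn
  · subst hn
    rw [Nat.cast_zero, ENNReal.zero_rpow_of_pos (one_div_pos.mpr hp0)]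
    exact bot_le
  · have key : ∀ δ : ℝ, 0 < δ →
        (n : ℝ≥0∞) ^ ((1:ℝ)/p) / ENNReal.ofReal (1 + δ) ^ ((1:ℝ)/p) ≤
        ⨆ (x : BIdx n → ℝ) (_ : x ≠ 0) (_ : Ynorm p w n x < ⊤),
          envNorm p (famYn w n) x / Ynorm p w n x := by
      intro δ hδ
      obtain ⟨x, hx0, hY, hE⟩ := construction p hp w hw hw0 n hn hδ
      have hYtop : Ynorm p w n x < ⊤ := lt_of_le_of_lt hY
        (ENNReal.rpow_lt_top_of_nonneg (one_div_nonneg.mpr hp0.le) ENNReal.ofReal_ne_top)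
      refine le_trans (ENNReal.div_le_div hE hY) ?_
      refine le_iSup_of_le x ?_
      refine le_iSup_of_le hx0 ?_
      exact le_iSup_of_le hYtop le_rfl
    have t1 : Tendsto (fun j : ℕ => ENNReal.ofReal (1 + (1:ℝ)/(j+1)) ^ ((1:ℝ)/p))
        atTop (nhds 1) := by
      have h1 : Tendsto (fun j : ℕ => 1 + (1:ℝ)/(j+1)) atTop (nhds 1) := by
        have h0 := tendsto_one_div_add_atTop_nhds_zero_nat (𝕜 := ℝ)
        have h0' := (tendsto_const_nhds (x := (1:ℝ)) (f := (atTop : Filter ℕ))).add h0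
        simpa using h0'
      have h2 := ENNReal.tendsto_ofReal h1
      have h3 := (ENNReal.continuous_rpow_const (y := ((1:ℝ)/p))).tendsto (ENNReal.ofReal 1)
      have h4 := h3.comp h2
      simpa [ENNReal.ofReal_one, ENNReal.one_rpow, Function.comp_def] using h4
    have t4 : Tendsto (fun j : ℕ => (n : ℝ≥0∞) ^ ((1:ℝ)/p)
        / ENNReal.ofReal (1 + (1:ℝ)/(j+1)) ^ ((1:ℝ)/p)) atTop
        (nhds ((n:ℝ≥0∞) ^ ((1:ℝ)/p))) := by
      have h5 := ENNReal.Tendsto.const_mul (a := (n : ℝ≥0∞) ^ ((1:ℝ)/p))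
        (ENNReal.tendsto_inv_iff.mpr t1) (Or.inl (by simp))
      simpa [div_eq_mul_inv] using h5
    exact le_of_tendsto t4 (Filter.Eventually.of_forall fun j => key _ (by positivity))
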